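/- Let E be a real vector space and β : E × E → ℝ a Lorentzian symmetric bilinear form with timelike vector v₀ (β(v₀,v₀) > 0 and β(x,x) < 0 for all nonzero x with β(v₀,x) = 0). Define W := {v ∈ E : β(v, v) > 0 and β(v₀, v) > 0}. Then: (1) W is a convex cone (convex and stable under multiplication by every t > 0); (2) for all v, w ∈ W one has β(v + w, v + w) ≥ β(v, v), equivalently χ(v + w) ≤ χ(v) for χ(v) := β(v, v)⁻¹; and (3) χ is strictly convex on W: for all v ≠ w in W and t ∈ (0, 1), χ(t v + (1 − t) w) < t χ(v) + (1 − t) χ(w). -/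

import Mathlib

section Aux

variable {E : Type*} [AddCommGroup E] [Module ℝ E]

/-- Any vector orthogonal to a timelike vector is spacelike. -/
lemma lor_aux_orth (β : E →ₗ[ℝ] E →ₗ[ℝ] ℝ) (hsymm : ∀ x y : E, β x y = β y x)
    (v₀ : E) (hneg : ∀ x : E, x ≠ 0 → β v₀ x = 0 → β x x < 0)
    (v : E) (hv : 0 < β v v) (x : E) (hx : x ≠ 0) (hvx : β v x = 0) :
    β x x < 0 := by
  by_contra h
  push_neg at h
  by_cases h0 : β v₀ x = 0
  · exact absurd (hneg x hx h0) (not_lt.mpr h)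
  · set s := β v₀ v / β v₀ x with hs
    set y := v - s • x with hy
    have hy0 : β v₀ y = 0 := by
      simp only [hy, map_sub, map_smul, smul_eq_mul, hs]
      field_simp
      ring
    have expand : β y y = β v v - s * β x v - s * β v x + s * s * β x x := by
      simp only [hy, map_sub, map_smul, LinearMap.sub_apply, LinearMap.smul_apply,
        smul_eq_mul]
      ring
    have hxv : β x v = 0 := by rw [hsymm]; exact hvx
    have h1 : s * β x v = 0 := by rw [hxv, mul_zero]
    have h2 : s * β v x = 0 := by rw [hvx, mul_zero]
    have hyy : 0 < β y y := by
      nlinarith [mul_nonneg (mul_self_nonneg s) h]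
    have hyne : y ≠ 0 := by
      intro h0'
      rw [h0'] at hyy; simp at hyy
    exact absurd (hneg y hyne hy0) (not_lt.mpr hyy.le)

/-- Reverse Cauchy–Schwarz with equality case. -/
lemma lor_revCS (β : E →ₗ[ℝ] E →ₗ[ℝ] ℝ) (hsymm : ∀ x y : E, β x y = β y x)
    (v₀ : E) (hneg : ∀ x : E, x ≠ 0 → β v₀ x = 0 → β x x < 0)
    (v : E) (hv : 0 < β v v) (w : E) :
    β v v * β w w < (β v w) ^ 2 ∨ w = (β v w / β v v) • v := by
  set c := β v w / β v v with hc
  set x := w - c • v with hx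
  have hcv : c * β v v = β v w := div_mul_cancel₀ _ (ne_of_gt hv)
  have hvx : β v x = 0 := by
    simp only [hx, map_sub, map_smul, smul_eq_mul]
    linarith [hcv, mul_comm c (β v v)]
  by_cases hx0 : x = 0
  · right
    rwa [hx, sub_eq_zero] at hx0
  · left
    have hxx : β x x < 0 := lor_aux_orth β hsymm v₀ hneg v hv x hx0 hvx
    have expand : β x x = β w w - c * β v w - c * β w v + c * c * β v v := by
      simp only [hx, map_sub, map_smul, LinearMap.sub_apply, LinearMap.smul_apply,
        smul_eq_mul]
      ring
    have hwv : β w v = β v w := hsymm w v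
    have e1 : c * β v w * β v v = β v w * β v w := by
      rw [mul_comm c (β v w), mul_assoc, hcv]
    have e2 : c * c * (β v v * β v v) = β v w * β v w := by
      calc c * c * (β v v * β v v) = (c * β v v) * (c * β v v) := by ring
        _ = β v w * β v w := by rw [hcv]
    have e3 : β v v * β w w
        = β v v * β x x + 2 * (c * β v w * β v v) - c * c * (β v v * β v v) := by
      rw [expand, hwv]; ring
    nlinarith [e1, e2, e3, mul_neg_of_pos_of_neg hv hxx]

/-- Two vectors in the same time cone pair positively. -/
lemma lor_pos_pair (β : E →ₗ[ℝ] E →ₗ[ℝ] ℝ) (hsymm : ∀ x y : E, β x y = β y x)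
    (v₀ : E) (hneg : ∀ x : E, x ≠ 0 → β v₀ x = 0 → β x x < 0)
    (v w : E) (hv : 0 < β v v) (hv0 : 0 < β v₀ v) (hw : 0 < β w w) (hw0 : 0 < β v₀ w) :
    0 < β v w := by
  by_contra h
  push_neg at h
  set u := (β v₀ w) • v - (β v₀ v) • w with hu
  have hu0 : β v₀ u = 0 := by
    simp only [hu, map_sub, map_smul, smul_eq_mul]
    ring
  have expand : β u u = (β v₀ w) * (β v₀ w) * β v v
      - (β v₀ w) * (β v₀ v) * β v w - (β v₀ v) * (β v₀ w) * β w v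
      + (β v₀ v) * (β v₀ v) * β w w := by
    simp only [hu, map_sub, map_smul, LinearMap.sub_apply, LinearMap.smul_apply,
      smul_eq_mul]
    ring
  have hwv : β w v = β v w := hsymm w v
  have huu : 0 < β u u := by nlinarith [mul_pos hw0 hw0, mul_pos hv0 hv0, mul_pos hv0 hw0]
  have hune : u ≠ 0 := by
    intro h0'
    rw [h0'] at huu; simp at huu
  exact absurd (hneg u hune hu0) (not_lt.mpr huu.le)

end Aux

set_option maxHeartbeats 1000000 in
/-- For a Lorentzian symmetric bilinear form `β` with timelike vector `v₀`, the set
`W = {v : β(v,v) > 0, β(v₀,v) > 0}` is a convex cone, the function `χ(v) = β(v,v)⁻¹`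
satisfies `β(v+w,v+w) ≥ β(v,v)` (equivalently `χ(v+w) ≤ χ(v)`) for `v, w ∈ W`, and `χ`
is strictly convex on `W`. -/
theorem lorentzian_cone_and_strict_convexity
    {E : Type*} [AddCommGroup E] [Module ℝ E]
    (β : E →ₗ[ℝ] E →ₗ[ℝ] ℝ) (hsymm : ∀ x y : E, β x y = β y x)
    (v₀ : E) (hv₀ : 0 < β v₀ v₀)
    (hneg : ∀ x : E, x ≠ 0 → β v₀ x = 0 → β x x < 0)
    (W : Set E) (hW : W = {v : E | 0 < β v v ∧ 0 < β v₀ v}) :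
    Convex ℝ W ∧ (∀ t : ℝ, 0 < t → ∀ v ∈ W, t • v ∈ W) ∧
      (∀ v ∈ W, ∀ w ∈ W, β v v ≤ β (v + w) (v + w) ∧
        (β (v + w) (v + w))⁻¹ ≤ (β v v)⁻¹) ∧
      (∀ v ∈ W, ∀ w ∈ W, v ≠ w → ∀ t : ℝ, 0 < t → t < 1 →
        (β (t • v + (1 - t) • w) (t • v + (1 - t) • w))⁻¹ <
          t * (β v v)⁻¹ + (1 - t) * (β w w)⁻¹) := by
  subst hW
  have expand : ∀ (a b : ℝ) (v w : E),
      β (a • v + b • w) (a • v + b • w)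
        = a * a * β v v + a * b * β v w + a * b * β w v + b * b * β w w := by
    intro a b v w
    simp only [map_add, map_smul, LinearMap.add_apply, LinearMap.smul_apply, smul_eq_mul]
    ring
  have hconv : Convex ℝ {v : E | 0 < β v v ∧ 0 < β v₀ v} := by
    intro v hv w hw a b ha hb hab
    obtain ⟨hvv, hv0⟩ := hv
    obtain ⟨hww, hw0⟩ := hw
    have hB := lor_pos_pair β hsymm v₀ hneg v w hvv hv0 hww hw0
    have hwv : β w v = β v w := hsymm w v
    rcases ha.eq_or_lt with rfl | hapos'
    · have hb1 : b = 1 := by linarith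
      subst hb1
      simp only [zero_smul, one_smul, zero_add]
      exact ⟨hww, hw0⟩
    · constructor
      · rw [expand]
        nlinarith [mul_pos (mul_pos hapos' hapos') hvv,
          mul_nonneg (mul_nonneg ha hb) hB.le, mul_nonneg (mul_nonneg hb hb) hww.le]
      · simp only [map_add, map_smul, smul_eq_mul]
        nlinarith [mul_pos hapos' hv0, mul_nonneg hb hw0.le]
  refine ⟨hconv, ?_, ?_, ?_⟩
  · intro t ht v hv
    obtain ⟨hvv, hv0⟩ := hv
    constructor
    · simp only [map_smul, LinearMap.smul_apply, smul_eq_mul]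
      exact mul_pos ht (mul_pos ht hvv)
    · simp only [map_smul, smul_eq_mul]
      exact mul_pos ht hv0
  · intro v hv w hw
    obtain ⟨hvv, hv0⟩ := hv
    obtain ⟨hww, hw0⟩ := hw
    have hB := lor_pos_pair β hsymm v₀ hneg v w hvv hv0 hww hw0
    have hwv : β w v = β v w := hsymm w v
    have hexp : β (v + w) (v + w) = β v v + β v w + β w v + β w w := by
      simp only [map_add, LinearMap.add_apply]
      ring
    have hle : β v v ≤ β (v + w) (v + w) := by rw [hexp]; nlinarith
    exact ⟨hle, inv_anti₀ hvv hle⟩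
  · intro v hv w hw hvw t ht ht1
    obtain ⟨hvv, hv0⟩ := hv
    obtain ⟨hww, hw0⟩ := hw
    have hB := lor_pos_pair β hsymm v₀ hneg v w hvv hv0 hww hw0
    have hwv : β w v = β v w := hsymm w v
    set s := 1 - t with hs
    have hst : 0 < s := by rw [hs]; linarith
    set a := Real.sqrt (β v v) with ha
    set c := Real.sqrt (β w w) with hc
    have ha2 : a ^ 2 = β v v := Real.sq_sqrt hvv.le
    have hc2 : c ^ 2 = β w w := Real.sq_sqrt hww.le
    have hapos : 0 < a := Real.sqrt_pos.mpr hvv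
    have hcpos : 0 < c := Real.sqrt_pos.mpr hww
    -- key dichotomy from reverse Cauchy–Schwarz
    have hkey : a * c < β v w ∨ (a * c = β v w ∧ a ≠ c) := by
      rcases lor_revCS β hsymm v₀ hneg v hvv w with hstrict | heq
      · left
        have hac : (a * c) ^ 2 < (β v w) ^ 2 := by
          rw [mul_pow, ha2, hc2]; exact hstrict
        nlinarith [mul_pos hapos hcpos]
      · right
        have hBA : 0 < β v w / β v v := div_pos hB hvv
        have hCval : β w w = (β v w / β v v) ^ 2 * β v v := by
          conv_lhs => rw [heq]
          simp only [map_smul, LinearMap.smul_apply, smul_eq_mul]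
          ring
        have hcval : c = (β v w / β v v) * a := by
          rw [hc, hCval, Real.sqrt_mul (sq_nonneg _), Real.sqrt_sq hBA.le, ha]
        have haa : a * a = β v v := by nlinarith [ha2]
        have hacB : a * c = β v w := by
          rw [hcval]
          calc a * (β v w / β v v * a) = (β v w / β v v) * (a * a) := by ring
            _ = (β v w / β v v) * (β v v) := by rw [haa]
            _ = β v w := div_mul_cancel₀ _ hvv.ne'
        refine ⟨hacB, fun hac_eq => hvw ?_⟩
        have hAC : β v v = β w w := by rw [← ha2, ← hc2, hac_eq]
        have hsq1 : (β v w / β v v) ^ 2 = 1 := by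
          rw [hCval] at hAC
          have := hvv
          field_simp at hAC
          nlinarith [hAC]
        have hBA1 : β v w / β v v = 1 := by nlinarith [hBA]
        rw [heq, hBA1, one_smul]
    -- the two bracket quantities are positive
    have hbr1 : 0 < (β v v) ^ 2 + 2 * (β v w) * (β w w) - 3 * (β v v) * (β w w) := by
      have hbase : 0 ≤ a * (a - c) ^ 2 * (a + 2 * c) := by positivity
      rcases hkey with hlt | ⟨heq, hne⟩
      · nlinarith [hbase, ha2, hc2, mul_pos hcpos hcpos]
      · have hne' : a - c ≠ 0 := sub_ne_zero.mpr hne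
        have h1 : 0 < (a - c) ^ 2 := lt_of_le_of_ne (sq_nonneg _) (Ne.symm (pow_ne_zero 2 hne'))
        have hbase' : 0 < a * (a - c) ^ 2 * (a + 2 * c) := by positivity
        nlinarith [hbase', ha2, hc2, heq]
    have hbr2 : 0 < (β w w) ^ 2 + 2 * (β v v) * (β v w) - 3 * (β v v) * (β w w) := by
      have hbase : 0 ≤ c * (c - a) ^ 2 * (c + 2 * a) := by positivity
      rcases hkey with hlt | ⟨heq, hne⟩
      · nlinarith [hbase, ha2, hc2, mul_pos hapos hapos]
      · have hne' : c - a ≠ 0 := sub_ne_zero.mpr (Ne.symm hne)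
        have h1 : 0 < (c - a) ^ 2 := lt_of_le_of_ne (sq_nonneg _) (Ne.symm (pow_ne_zero 2 hne'))
        have hbase' : 0 < c * (c - a) ^ 2 * (c + 2 * a) := by positivity
        nlinarith [hbase', ha2, hc2, heq]
    -- assemble
    set N := β (t • v + s • w) (t • v + s • w) with hN
    have hNexp : N = t * t * β v v + t * s * β v w + t * s * β v w + s * s * β w w := by
      rw [hN, expand, hwv]
    have hNpos : 0 < N := by
      rw [hNexp]
      nlinarith [mul_pos ht ht, mul_pos hst hst, mul_pos ht hst]
    have hD : N * (t * β w w + s * β v v) - β v v * β w w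
        = t ^ 2 * s * ((β v v) ^ 2 + 2 * (β v w) * (β w w) - 3 * (β v v) * (β w w))
          + t * s ^ 2 * ((β w w) ^ 2 + 2 * (β v v) * (β v w) - 3 * (β v v) * (β w w)) := by
      rw [hNexp, hs]; ring
    have hkey2 : β v v * β w w < N * (t * β w w + s * β v v) := by
      linarith [mul_pos (mul_pos (mul_pos ht ht) hst) hbr1,
        mul_pos (mul_pos ht (mul_pos hst hst)) hbr2, hD]
    have hA0 : β v v ≠ 0 := hvv.ne'
    have hC0 : β w w ≠ 0 := hww.ne'
    have hrhs : t * (β v v)⁻¹ + s * (β w w)⁻¹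
        = (t * β w w + s * β v v) / (β v v * β w w) := by
      field_simp
    rw [hrhs, inv_eq_one_div]
    rw [div_lt_div_iff₀ hNpos (mul_pos hvv hww)]
    linarith [hkey2]
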